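/- Let E be a real Banach space, let τ_1, …, τ_N > 0 be time steps, and let u : ℝ → E be three times continuously differentiable on [0, t_N]. For 1 ≤ j ≤ N define the consistency error η^j := D_2 (u∘t)^j − u'(t_j), i.e. η^1 := (u(t_1) − u(t_0))/τ_1 − u'(t_1) and η^j := b^{(j)}_0(u(t_j) − u(t_{j−1})) + b^{(j)}_1(u(t_{j−1}) − u(t_{j−2})) − u'(t_j) for j ≥ 2. Then for every 1 ≤ n ≤ N, Σ_{k=1}^n Σ_{j=1}^k θ^{(k)}_{k−j} ‖η^j‖ ≤ τ_1·(Σ_{k=1}^n θ̂^{(k)}_{k−1})·∫_0^{t_1} ‖u''(t)‖ dt + (3/2)·Σ_{j=1}^n τ_j²·(Σ_{k=j}^n θ̂^{(k)}_{k−j})·∫_{t_{j−1}}^{t_j} ‖u'''(t)‖ dt. -/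

import Mathlib

open Finset intervalIntegral Set

/-- BDF2 convolution kernels `b^{(n)}_j` built from the step sizes `τ`. -/
noncomputable def bdf2 (τ : ℕ → ℝ) (n j : ℕ) : ℝ :=
  if n = 1 then (if j = 0 then 1 / τ 1 else 0)
  else if j = 0 then (1 + 2 * (τ n / τ (n - 1))) / (τ n * (1 + τ n / τ (n - 1)))
  else if j = 1 then -(τ n / τ (n - 1)) ^ 2 / (τ n * (1 + τ n / τ (n - 1)))
  else 0

/-- DOC kernels: `doc τ n g = θ^{(n)}_g`, defined by the recursive procedure
`θ^{(n)}_0 = 1/b^{(n)}_0`, `θ^{(n)}_{n-k} = -(1/b^{(k)}_0) ∑_{j=k+1}^n θ^{(n)}_{n-j} b^{(j)}_{j-k}`. -/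
noncomputable def doc (τ : ℕ → ℝ) (n : ℕ) : ℕ → ℝ
  | 0 => 1 / bdf2 τ n 0
  | (g + 1) =>
    -(1 / bdf2 τ (n - (g + 1)) 0) *
      ∑ i ∈ (Finset.range (g + 1)).attach,
        doc τ n i.1 * bdf2 τ (n - i.1) (g + 1 - i.1)
  decreasing_by exact Finset.mem_range.mp i.2

/-- The variable-step BDF2 formula `D_2 v^n = ∑_{k=1}^n b^{(n)}_{n-k} (v^k - v^{k-1})`. -/
noncomputable def D2 {V : Type*} [AddCommGroup V] [Module ℝ V]
    (τ : ℕ → ℝ) (v : ℕ → V) (n : ℕ) : V :=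
  ∑ k ∈ Finset.Icc 1 n, bdf2 τ n (n - k) • (v k - v (k - 1))

/-- Time levels `t_n = τ_1 + ⋯ + τ_n`. -/
noncomputable def tlv (τ : ℕ → ℝ) (n : ℕ) : ℝ := ∑ i ∈ Finset.Icc 1 n, τ i

lemma bdf2_zero (τ : ℕ → ℝ) {n j : ℕ} (hn : n ≠ 1) (hj : 2 ≤ j) : bdf2 τ n j = 0 := by
  unfold bdf2
  rw [if_neg hn, if_neg (by omega), if_neg (by omega)]

lemma bdf2_zero' (τ : ℕ → ℝ) {j : ℕ} (hj : j ≠ 0) : bdf2 τ 1 j = 0 := by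
  unfold bdf2
  rw [if_pos rfl, if_neg hj]

lemma doc_succ (τ : ℕ → ℝ) (n g : ℕ) (h : g + 2 ≤ n) :
    doc τ n (g + 1) = -(bdf2 τ (n - g) 1 / bdf2 τ (n - (g + 1)) 0) * doc τ n g := by
  rw [doc]
  rw [Finset.sum_attach (Finset.range (g+1)) (fun i => doc τ n i * bdf2 τ (n - i) (g + 1 - i))]
  rw [Finset.sum_eq_single g]
  · rw [show g + 1 - g = 1 by omega]
    ring
  · intro b hb hbg
    have hb' : b < g + 1 := Finset.mem_range.mp hb
    have h2 : 2 ≤ g + 1 - b := by omega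
    rw [bdf2_zero τ (by omega) h2, mul_zero]
  · intro h'
    exact absurd (Finset.self_mem_range_succ g) h'

lemma bdf2_one_zero (τ : ℕ → ℝ) : bdf2 τ 1 0 = 1 / τ 1 := by
  unfold bdf2; simp

lemma bdf2_zero_eq (τ : ℕ → ℝ) {n : ℕ} (hn : 2 ≤ n) :
    bdf2 τ n 0 = (1 + 2 * (τ n / τ (n - 1))) / (τ n * (1 + τ n / τ (n - 1))) := by
  unfold bdf2; rw [if_neg (by omega), if_pos rfl]

lemma bdf2_one_eq (τ : ℕ → ℝ) {n : ℕ} (hn : 2 ≤ n) :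
    bdf2 τ n 1 = -(τ n / τ (n - 1)) ^ 2 / (τ n * (1 + τ n / τ (n - 1))) := by
  unfold bdf2; rw [if_neg (by omega), if_neg (by omega), if_pos rfl]

section Pos
variable (N : ℕ) (τ : ℕ → ℝ) (hτ : ∀ k, 1 ≤ k → k ≤ N → 0 < τ k)
include hτ

lemma bdf2_zero_pos {n : ℕ} (h1 : 1 ≤ n) (h2 : n ≤ N) : 0 < bdf2 τ n 0 := by
  rcases eq_or_lt_of_le h1 with h | h
  · rw [← h, bdf2_one_zero]
    have := hτ 1 le_rfl (by omega)
    positivity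
  · have hn : 2 ≤ n := h
    rw [bdf2_zero_eq τ hn]
    have h1 := hτ n (by omega) h2
    have h2 := hτ (n-1) (by omega) (by omega)
    have hr : 0 < τ n / τ (n-1) := div_pos h1 h2
    positivity

lemma bdf2_one_neg {n : ℕ} (h1 : 2 ≤ n) (h2 : n ≤ N) : bdf2 τ n 1 < 0 := by
  rw [bdf2_one_eq τ h1]
  have ha := hτ n (by omega) h2
  have hb := hτ (n-1) (by omega) (by omega)
  have hr : 0 < τ n / τ (n-1) := div_pos ha hb
  apply div_neg_of_neg_of_pos
  · nlinarith
  · positivity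

lemma doc_pos : ∀ g : ℕ, ∀ k : ℕ, k ≤ N → g + 1 ≤ k → 0 < doc τ k g := by
  intro g
  induction g with
  | zero =>
    intro k hkN hk
    rw [doc]
    exact one_div_pos.mpr (bdf2_zero_pos N τ hτ hk hkN)
  | succ g ih =>
    intro k hkN hk
    rw [doc_succ τ k g (by omega)]
    have h1 : bdf2 τ (k - g) 1 < 0 := bdf2_one_neg N τ hτ (by omega) (by omega)
    have h2 : 0 < bdf2 τ (k - (g+1)) 0 := bdf2_zero_pos N τ hτ (by omega) (by omega)
    have h3 : 0 < doc τ k g := ih k hkN (by omega)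
    have : bdf2 τ (k - g) 1 / bdf2 τ (k - (g+1)) 0 < 0 := div_neg_of_neg_of_pos h1 h2
    nlinarith

end Pos


lemma tlv_zero (τ : ℕ → ℝ) : tlv τ 0 = 0 := by simp [tlv]

lemma tlv_one (τ : ℕ → ℝ) : tlv τ 1 = τ 1 := by simp [tlv]

lemma tlv_succ (τ : ℕ → ℝ) {j : ℕ} (hj : 1 ≤ j) : tlv τ j = tlv τ (j - 1) + τ j := by
  obtain ⟨m, rfl⟩ : ∃ m, j = m + 1 := ⟨j - 1, by omega⟩
  unfold tlv
  rw [Finset.sum_Icc_succ_top (by omega : 1 ≤ m + 1)]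
  simp

lemma tlv_mono (N : ℕ) (τ : ℕ → ℝ) (hτ : ∀ k, 1 ≤ k → k ≤ N → 0 < τ k)
    {a b : ℕ} (hab : a ≤ b) (hb : b ≤ N) : tlv τ a ≤ tlv τ b := by
  unfold tlv
  apply Finset.sum_le_sum_of_subset_of_nonneg (Finset.Icc_subset_Icc_right hab)
  intro i hi _
  exact (hτ i (Finset.mem_Icc.mp hi).1 (le_trans (Finset.mem_Icc.mp hi).2 hb)).le

lemma tlv_nonneg (N : ℕ) (τ : ℕ → ℝ) (hτ : ∀ k, 1 ≤ k → k ≤ N → 0 < τ k)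
    {a : ℕ} (ha : a ≤ N) : 0 ≤ tlv τ a := by
  have := tlv_mono N τ hτ (Nat.zero_le a) ha
  rwa [tlv_zero] at this

lemma D2_one {V : Type*} [AddCommGroup V] [Module ℝ V] (τ : ℕ → ℝ) (v : ℕ → V) :
    D2 τ v 1 = bdf2 τ 1 0 • (v 1 - v 0) := by
  unfold D2
  simp

lemma D2_two {V : Type*} [AddCommGroup V] [Module ℝ V] (τ : ℕ → ℝ) (v : ℕ → V)
    {j : ℕ} (hj : 2 ≤ j) :
    D2 τ v j = bdf2 τ j 1 • (v (j-1) - v (j-2)) + bdf2 τ j 0 • (v j - v (j-1)) := by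
  unfold D2
  have hsub : Finset.Icc (j-1) j ⊆ Finset.Icc 1 j := by
    intro x hx; simp at hx ⊢; omega
  rw [← Finset.sum_subset hsub]
  · have hpair : Finset.Icc (j-1) j = {j-1, j} := by
      ext x; simp; omega
    rw [hpair, Finset.sum_pair (by omega : j - 1 ≠ j)]
    rw [show j - (j-1) = 1 by omega, show j - j = 0 by omega,
        show j - 1 - 1 = j - 2 by omega]
  · intro x hx hx'
    simp at hx hx'
    have h2 : 2 ≤ j - x := by omega
    rw [bdf2_zero τ (by omega) h2, zero_smul]


lemma tau_b0_ge_one (N : ℕ) (τ : ℕ → ℝ) (hτ : ∀ k, 1 ≤ k → k ≤ N → 0 < τ k)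
    {j : ℕ} (h1 : 1 ≤ j) (h2 : j ≤ N) : 1 ≤ τ j * bdf2 τ j 0 := by
  rcases eq_or_lt_of_le h1 with h | h
  · rw [← h, bdf2_one_zero]
    have := hτ 1 le_rfl (by omega)
    field_simp
    norm_num
  · have hj2 : 2 ≤ j := h
    rw [bdf2_zero_eq τ hj2]
    have ha := hτ j (by omega) h2
    have hb := hτ (j-1) (by omega) (by omega)
    have hr : 0 < τ j / τ (j-1) := div_pos ha hb
    have heq : τ j * ((1 + 2 * (τ j / τ (j-1))) / (τ j * (1 + τ j / τ (j-1))))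
        = (1 + 2 * (τ j / τ (j-1))) / (1 + τ j / τ (j-1)) := by
      field_simp
    rw [heq, le_div_iff₀ (by positivity)]
    linarith

lemma KSI (N : ℕ) (τ : ℕ → ℝ) (hτ : ∀ k, 1 ≤ k → k ≤ N → 0 < τ k)
    {k j : ℕ} (hj2 : 2 ≤ j) (hjk : j ≤ k) (hkN : k ≤ N) :
    doc τ k (k - j) * ((τ j / τ (j-1))^2 / (τ j * (1 + τ j / τ (j-1))) * ((τ (j-1))^2 / 2))
      = 1/2 * (τ (j-1))^2 * (doc τ k (k - (j-1)) * bdf2 τ (j-1) 0) := by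
  have hds := doc_succ τ k (k - j) (by omega)
  rw [show k - (k - j + 1) = j - 1 by omega, show k - (k - j) = j by omega,
      show k - j + 1 = k - (j - 1) by omega, bdf2_one_eq τ hj2] at hds
  rw [hds]
  have ha := hτ j (by omega) (le_trans hjk hkN)
  have hb := hτ (j-1) (by omega) (by omega)
  have hb0 : 0 < bdf2 τ (j-1) 0 := bdf2_zero_pos N τ hτ (by omega) (by omega)
  have h1r : (0:ℝ) < 1 + τ j / τ (j-1) := by positivity
  field_simp


open Finset intervalIntegral Set

section Taylor
variable {E : Type*} [NormedAddCommGroup E] [NormedSpace ℝ E] [CompleteSpace E]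
variable (T : ℝ) (u u' u'' u''' : ℝ → E)

lemma my_taylor1
    (hu' : ∀ x ∈ Set.Icc (0:ℝ) T, HasDerivWithinAt u (u' x) (Set.Icc (0:ℝ) T) x)
    (hu'' : ∀ x ∈ Set.Icc (0:ℝ) T, HasDerivWithinAt u' (u'' x) (Set.Icc (0:ℝ) T) x)
    (hcont2 : ContinuousOn u'' (Set.Icc (0:ℝ) T))
    (a b : ℝ) (ha : 0 ≤ a) (hab : a ≤ b) (hb : b ≤ T) :
    ∫ s in a..b, (a - s) • u'' s = u b + (a - b) • u' b - u a := by
  have hsub : Set.Icc a b ⊆ Set.Icc (0:ℝ) T := Set.Icc_subset_Icc ha hb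
  have cu : ContinuousOn u (Set.Icc (0:ℝ) T) := fun x hx => (hu' x hx).continuousWithinAt
  have cu' : ContinuousOn u' (Set.Icc (0:ℝ) T) := fun x hx => (hu'' x hx).continuousWithinAt
  have hcont : ContinuousOn (fun s => u s + (a - s) • u' s) (Set.Icc a b) :=
    (cu.mono hsub).add (((by fun_prop : Continuous fun s : ℝ => a - s).continuousOn).smul
      (cu'.mono hsub))
  have hderiv : ∀ x ∈ Set.Ioo a b,
      HasDerivWithinAt (fun s => u s + (a - s) • u' s) ((a - x) • u'' x) (Set.Ioi x) x := by
    intro x hx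
    have hxT : x ∈ Set.Icc (0:ℝ) T := hsub (Set.Ioo_subset_Icc_self hx)
    have hmem : Set.Icc (0:ℝ) T ∈ nhds x :=
      Icc_mem_nhds (lt_of_le_of_lt ha hx.1) (lt_of_lt_of_le hx.2 hb)
    have d1 : HasDerivAt u (u' x) x := (hu' x hxT).hasDerivAt hmem
    have d2 : HasDerivAt u' (u'' x) x := (hu'' x hxT).hasDerivAt hmem
    have hc1 : HasDerivAt (fun s : ℝ => a - s) (-1 : ℝ) x := by
      simpa using (hasDerivAt_id x).const_sub a
    have h := d1.add (hc1.smul d2)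
    have h2 : HasDerivAt (fun s => u s + (a - s) • u' s) ((a - x) • u'' x) x := by
      convert h using 1
      · rfl
      · module
    exact h2.hasDerivWithinAt
  have hint : IntervalIntegrable (fun s => (a - s) • u'' s) MeasureTheory.volume a b := by
    apply ContinuousOn.intervalIntegrable
    rw [Set.uIcc_of_le hab]
    exact ((by fun_prop : Continuous fun s : ℝ => a - s).continuousOn).smul (hcont2.mono hsub)
  have := intervalIntegral.integral_eq_sub_of_hasDeriv_right_of_le hab hcont hderiv hint
  rw [this]
  simp

lemma my_taylor2
    (hu' : ∀ x ∈ Set.Icc (0:ℝ) T, HasDerivWithinAt u (u' x) (Set.Icc (0:ℝ) T) x)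
    (hu'' : ∀ x ∈ Set.Icc (0:ℝ) T, HasDerivWithinAt u' (u'' x) (Set.Icc (0:ℝ) T) x)
    (hu''' : ∀ x ∈ Set.Icc (0:ℝ) T, HasDerivWithinAt u'' (u''' x) (Set.Icc (0:ℝ) T) x)
    (hcont3 : ContinuousOn u''' (Set.Icc (0:ℝ) T))
    (a b : ℝ) (ha : 0 ≤ a) (hab : a ≤ b) (hb : b ≤ T) :
    ∫ s in a..b, ((a - s)^2/2) • u''' s
      = u b + ((a - b) • u' b + ((a - b)^2/2) • u'' b) - u a := by
  have hsub : Set.Icc a b ⊆ Set.Icc (0:ℝ) T := Set.Icc_subset_Icc ha hb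
  have cu : ContinuousOn u (Set.Icc (0:ℝ) T) := fun x hx => (hu' x hx).continuousWithinAt
  have cu' : ContinuousOn u' (Set.Icc (0:ℝ) T) := fun x hx => (hu'' x hx).continuousWithinAt
  have cu'' : ContinuousOn u'' (Set.Icc (0:ℝ) T) := fun x hx => (hu''' x hx).continuousWithinAt
  set g : ℝ → E := fun s => u s + ((a - s) • u' s + ((a - s)^2/2) • u'' s) with hg
  have hcont : ContinuousOn g (Set.Icc a b) :=
    (cu.mono hsub).add
      ((((by fun_prop : Continuous fun s : ℝ => a - s).continuousOn).smul
        (cu'.mono hsub)).add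
       (((by fun_prop : Continuous fun s : ℝ => (a - s)^2/2).continuousOn).smul
        (cu''.mono hsub)))
  have hderiv : ∀ x ∈ Set.Ioo a b,
      HasDerivWithinAt g (((a - x)^2/2) • u''' x) (Set.Ioi x) x := by
    intro x hx
    have hxT : x ∈ Set.Icc (0:ℝ) T := hsub (Set.Ioo_subset_Icc_self hx)
    have hmem : Set.Icc (0:ℝ) T ∈ nhds x :=
      Icc_mem_nhds (lt_of_le_of_lt ha hx.1) (lt_of_lt_of_le hx.2 hb)
    have d1 : HasDerivAt u (u' x) x := (hu' x hxT).hasDerivAt hmem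
    have d2 : HasDerivAt u' (u'' x) x := (hu'' x hxT).hasDerivAt hmem
    have d3 : HasDerivAt u'' (u''' x) x := (hu''' x hxT).hasDerivAt hmem
    have hc1 : HasDerivAt (fun s : ℝ => a - s) (-1 : ℝ) x := by
      simpa using (hasDerivAt_id x).const_sub a
    have hc2 : HasDerivAt (fun s : ℝ => (a - s)^2/2) (-(a - x)) x := by
      have := (hc1.pow 2).div_const 2
      exact this.congr_deriv (by norm_num; ring)
    have h := d1.add ((hc1.smul d2).add (hc2.smul d3))
    have h2 : HasDerivAt g (((a - x)^2/2) • u''' x) x := by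
      rw [hg]; convert h using 1
      · rfl
      · module
    exact h2.hasDerivWithinAt
  have hint : IntervalIntegrable (fun s => ((a - s)^2/2) • u''' s) MeasureTheory.volume a b := by
    apply ContinuousOn.intervalIntegrable
    rw [Set.uIcc_of_le hab]
    exact ((by fun_prop : Continuous fun s : ℝ => (a - s)^2/2).continuousOn).smul
      (hcont3.mono hsub)
  have := intervalIntegral.integral_eq_sub_of_hasDeriv_right_of_le hab hcont hderiv hint
  rw [this, hg]
  simp

end Taylor
open Finset intervalIntegral Set

section B
variable {E : Type*} [NormedAddCommGroup E] [NormedSpace ℝ E]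

lemma my_norm_int_le (v : ℝ → E) (k : ℝ → ℝ) (C a b : ℝ) (hab : a ≤ b)
    (hk : ContinuousOn k (Set.Icc a b)) (hv : ContinuousOn v (Set.Icc a b))
    (hbound : ∀ s ∈ Set.Icc a b, |k s| ≤ C) :
    ‖∫ s in a..b, k s • v s‖ ≤ C * ∫ s in a..b, ‖v s‖ := by
  have int1 : IntervalIntegrable (fun s => ‖k s • v s‖) MeasureTheory.volume a b := by
    apply ContinuousOn.intervalIntegrable
    rw [Set.uIcc_of_le hab]
    exact (hk.smul hv).norm
  have int2 : IntervalIntegrable (fun s => C * ‖v s‖) MeasureTheory.volume a b := by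
    apply ContinuousOn.intervalIntegrable
    rw [Set.uIcc_of_le hab]
    exact continuousOn_const.mul hv.norm
  calc ‖∫ s in a..b, k s • v s‖ ≤ ∫ s in a..b, ‖k s • v s‖ :=
        intervalIntegral.norm_integral_le_integral_norm hab
    _ ≤ ∫ s in a..b, C * ‖v s‖ := by
        apply intervalIntegral.integral_mono_on hab int1 int2
        intro s hs
        rw [norm_smul, Real.norm_eq_abs]
        exact mul_le_mul_of_nonneg_right (hbound s hs) (norm_nonneg _)
    _ = C * ∫ s in a..b, ‖v s‖ := intervalIntegral.integral_const_mul C _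

end B
open Finset intervalIntegral Set

lemma kern1 (τa τb x : ℝ) (ha : 0 < τa) (hb : 0 < τb) (hx1 : 0 ≤ x) (hx2 : x ≤ τb) :
    |((1 + 2*(τb/τa))/(τb*(1+τb/τa)) - (-(τb/τa)^2/(τb*(1+τb/τa)))) * (x^2/2)
      + (-(τb/τa)^2/(τb*(1+τb/τa))) * ((x+τa)^2/2)| ≤ τb := by
  have h1 : (0:ℝ) < 1 + τb/τa := by positivity
  have hD : (0:ℝ) < 2*τb*(1+τb/τa) := by positivity
  have key : ((1 + 2*(τb/τa))/(τb*(1+τb/τa)) - (-(τb/τa)^2/(τb*(1+τb/τa)))) * (x^2/2)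
      + (-(τb/τa)^2/(τb*(1+τb/τa))) * ((x+τa)^2/2)
      = (x - τb)*((1+2*(τb/τa))*x + τb) / (2*τb*(1+τb/τa)) := by
    field_simp
    ring
  rw [key, abs_le]
  have hr : 0 < τb/τa := div_pos hb ha
  constructor
  · rw [le_div_iff₀ hD]
    nlinarith [mul_nonneg (sub_nonneg.mpr hx2) (by nlinarith : (0:ℝ) ≤ 2*τb*(1+τb/τa) - ((1+2*(τb/τa))*x + τb)), mul_pos hb hr]
  · rw [div_le_iff₀ hD]
    nlinarith [mul_nonneg (sub_nonneg.mpr hx2) (by nlinarith : (0:ℝ) ≤ (1+2*(τb/τa))*x + τb), mul_pos hb hr]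

section Eta
variable {E : Type*} [NormedAddCommGroup E] [NormedSpace ℝ E] [CompleteSpace E]
variable (T : ℝ) (u u' u'' u''' : ℝ → E)
variable (hu' : ∀ x ∈ Set.Icc (0:ℝ) T, HasDerivWithinAt u (u' x) (Set.Icc (0:ℝ) T) x)
variable (hu'' : ∀ x ∈ Set.Icc (0:ℝ) T, HasDerivWithinAt u' (u'' x) (Set.Icc (0:ℝ) T) x)
variable (hu''' : ∀ x ∈ Set.Icc (0:ℝ) T, HasDerivWithinAt u'' (u''' x) (Set.Icc (0:ℝ) T) x)
variable (hcont2 : ContinuousOn u'' (Set.Icc (0:ℝ) T))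
variable (hcont3 : ContinuousOn u''' (Set.Icc (0:ℝ) T))

include hu' hu'' hcont2 in
lemma eta1_bound (t1 : ℝ) (ht1 : 0 < t1) (hT : t1 ≤ T) :
    ‖(1/t1) • (u t1 - u 0) - u' t1‖ ≤ ∫ s in (0:ℝ)..t1, ‖u'' s‖ := by
  have h1 := my_taylor1 T u u' u'' hu' hu'' hcont2 0 t1 le_rfl ht1.le hT
  have key : (1/t1) • (u t1 - u 0) - u' t1
      = (1/t1) • (∫ s in (0:ℝ)..t1, (0 - s) • u'' s) := by
    rw [h1]
    match_scalars <;> field_simp <;> ring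
  rw [key, norm_smul, Real.norm_eq_abs, abs_of_pos (by positivity : (0:ℝ) < 1/t1)]
  have hb : ‖∫ s in (0:ℝ)..t1, (0 - s) • u'' s‖ ≤ t1 * ∫ s in (0:ℝ)..t1, ‖u'' s‖ := by
    apply my_norm_int_le u'' (fun s => 0 - s) t1 0 t1 ht1.le
    · fun_prop
    · exact hcont2.mono (Set.Icc_subset_Icc le_rfl hT)
    · intro s hs
      simp only [Set.mem_Icc] at hs
      rw [abs_of_nonpos (by linarith), ]
      linarith
  calc (1/t1) * ‖∫ s in (0:ℝ)..t1, (0 - s) • u'' s‖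
      ≤ (1/t1) * (t1 * ∫ s in (0:ℝ)..t1, ‖u'' s‖) := by
        apply mul_le_mul_of_nonneg_left hb (by positivity)
    _ = ∫ s in (0:ℝ)..t1, ‖u'' s‖ := by field_simp

include hu' hu'' hu''' hcont3 in
lemma eta2_bound (τa τb p : ℝ) (ha : 0 < τa) (hb : 0 < τb) (hp : 0 ≤ p)
    (hT : p + τa + τb ≤ T) :
    ‖(-(τb/τa)^2/(τb*(1+τb/τa))) • (u (p + τa) - u p)
      + ((1 + 2*(τb/τa))/(τb*(1+τb/τa))) • (u (p + τa + τb) - u (p + τa))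
      - u' (p + τa + τb)‖
    ≤ τb * (∫ s in (p+τa)..(p+τa+τb), ‖u''' s‖)
      + ((τb/τa)^2/(τb*(1+τb/τa)) * (τa^2/2)) * (∫ s in p..(p+τa), ‖u''' s‖) := by
  set q : ℝ := p + τa with hq
  set rr : ℝ := p + τa + τb with hrr
  have hpq : p ≤ q := by rw [hq]; linarith
  have hqr : q ≤ rr := by rw [hrr, hq]; linarith
  have hqT : q ≤ T := by linarith
  have hq0 : 0 ≤ q := by linarith
  set b0 : ℝ := (1 + 2*(τb/τa))/(τb*(1+τb/τa)) with hb0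
  set b1 : ℝ := -(τb/τa)^2/(τb*(1+τb/τa)) with hb1
  have h1 := my_taylor2 T u u' u'' u''' hu' hu'' hu''' hcont3 q rr hq0 hqr hT
  have h2 := my_taylor2 T u u' u'' u''' hu' hu'' hu''' hcont3 p rr hp (by linarith) hT
  have hsub1 : Set.Icc q rr ⊆ Set.Icc (0:ℝ) T := Set.Icc_subset_Icc hq0 hT
  have hsub2 : Set.Icc p q ⊆ Set.Icc (0:ℝ) T := Set.Icc_subset_Icc hp hqT
  -- integrability of the (p-s)²/2 integrand on both subintervals
  have hcint : ∀ a' b' : ℝ, a' ≤ b' → Set.Icc a' b' ⊆ Set.Icc (0:ℝ) T →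
      IntervalIntegrable (fun s => ((p - s)^2/2) • u''' s) MeasureTheory.volume a' b' := by
    intro a' b' hab hss
    apply ContinuousOn.intervalIntegrable
    rw [Set.uIcc_of_le hab]
    exact ((by fun_prop : Continuous fun s : ℝ => (p - s)^2/2).continuousOn).smul
      (hcont3.mono hss)
  have hsplit : (∫ s in p..q, ((p - s)^2/2) • u''' s) + (∫ s in q..rr, ((p - s)^2/2) • u''' s)
      = ∫ s in p..rr, ((p - s)^2/2) • u''' s :=
    intervalIntegral.integral_add_adjacent_intervals
      (hcint p q hpq hsub2) (hcint q rr hqr hsub1)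
  -- step 1 : error = (b0 - b1) • Iq + b1 • Ip
  have step1 : b1 • (u q - u p) + b0 • (u rr - u q) - u' rr
      = (b0 - b1) • (∫ s in q..rr, ((q - s)^2/2) • u''' s)
        + b1 • (∫ s in p..rr, ((p - s)^2/2) • u''' s) := by
    have ha0 : τa ≠ 0 := ne_of_gt ha
    have hb0' : τb ≠ 0 := ne_of_gt hb
    have hD0 : τb + τb^2 * τa⁻¹ ≠ 0 := by positivity
    rw [h1, h2]
    simp only [hq, hrr, hb0, hb1]
    match_scalars <;> (field_simp; try ring)
  rw [← hsplit] at step1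
  -- step 2 : combine the two q..rr integrals
  have hintq : IntervalIntegrable (fun s => ((q - s)^2/2) • u''' s) MeasureTheory.volume q rr := by
    apply ContinuousOn.intervalIntegrable
    rw [Set.uIcc_of_le hqr]
    exact ((by fun_prop : Continuous fun s : ℝ => (q - s)^2/2).continuousOn).smul
      (hcont3.mono hsub1)
  have step2 : (b0 - b1) • (∫ s in q..rr, ((q - s)^2/2) • u''' s)
        + b1 • (∫ s in q..rr, ((p - s)^2/2) • u''' s)
      = ∫ s in q..rr, ((b0 - b1) * ((q - s)^2/2) + b1 * ((p - s)^2/2)) • u''' s := by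
    rw [← intervalIntegral.integral_smul, ← intervalIntegral.integral_smul,
        ← intervalIntegral.integral_add]
    · apply intervalIntegral.integral_congr
      intro s _
      dsimp only
      rw [add_smul, smul_smul, smul_smul]
    · exact (hintq).smul (b0 - b1)
    · exact (hcint q rr hqr hsub1).smul b1
  have step3 : b1 • (u q - u p) + b0 • (u rr - u q) - u' rr
      = (∫ s in q..rr, ((b0 - b1) * ((q - s)^2/2) + b1 * ((p - s)^2/2)) • u''' s)
        + b1 • (∫ s in p..q, ((p - s)^2/2) • u''' s) := by
    rw [step1, ← step2]
    module
  rw [step3]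
  apply le_trans (norm_add_le _ _)
  have bound1 : ‖∫ s in q..rr, ((b0 - b1) * ((q - s)^2/2) + b1 * ((p - s)^2/2)) • u''' s‖
      ≤ τb * ∫ s in q..rr, ‖u''' s‖ := by
    apply my_norm_int_le u''' _ τb q rr hqr
    · fun_prop
    · exact hcont3.mono hsub1
    · intro s hs
      simp only [Set.mem_Icc] at hs
      obtain ⟨hs1, hs2⟩ := hs
      have hx1 : (0:ℝ) ≤ s - q := by linarith
      have hx2 : s - q ≤ τb := by rw [hq]; rw [hrr] at hs2; linarith
      have := kern1 τa τb (s - q) ha hb hx1 hx2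
      convert this using 3
      · rw [hb0, hb1]
        ring_nf
      · rw [hb1, hq]
        ring_nf
  have bound2 : ‖b1 • (∫ s in p..q, ((p - s)^2/2) • u''' s)‖
      ≤ ((τb/τa)^2/(τb*(1+τb/τa)) * (τa^2/2)) * ∫ s in p..q, ‖u''' s‖ := by
    rw [← intervalIntegral.integral_smul]
    have : ∀ s, b1 • (((p - s)^2/2) • u''' s) = (b1 * ((p - s)^2/2)) • u''' s := by
      intro s; rw [smul_smul]
    simp only [this]
    apply my_norm_int_le u''' _ _ p q hpq
    · fun_prop
    · exact hcont3.mono hsub2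
    · intro s hs
      simp only [Set.mem_Icc] at hs
      rw [abs_mul, hb1]
      have h3 : |(-(τb/τa)^2/(τb*(1+τb/τa)))| = (τb/τa)^2/(τb*(1+τb/τa)) := by
        rw [abs_of_nonpos]
        · ring
        · apply div_nonpos_of_nonpos_of_nonneg
          · exact neg_nonpos.mpr (by positivity)
          · positivity
      rw [h3]
      apply mul_le_mul_of_nonneg_left _ (by positivity)
      rw [abs_of_nonneg (by positivity)]
      obtain ⟨hs1, hs2⟩ := hs
      have : (p - s)^2 ≤ τa^2 := by
        rw [hq] at hs2
        nlinarith
      linarith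
  linarith

end Eta

/-- global consistency error bound of Lemma 3.2, with
`θ̂^{(k)}_{k-j} = θ^{(k)}_{k-j} b^{(j)}_0`. -/
theorem bdf2_global_consistency_bound
    {E : Type*} [NormedAddCommGroup E] [NormedSpace ℝ E] [CompleteSpace E]
    (N : ℕ) (τ : ℕ → ℝ) (hτ : ∀ k, 1 ≤ k → k ≤ N → 0 < τ k)
    (u u' u'' u''' : ℝ → E)
    (hu' : ∀ x ∈ Set.Icc (0 : ℝ) (tlv τ N),
      HasDerivWithinAt u (u' x) (Set.Icc (0 : ℝ) (tlv τ N)) x)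
    (hu'' : ∀ x ∈ Set.Icc (0 : ℝ) (tlv τ N),
      HasDerivWithinAt u' (u'' x) (Set.Icc (0 : ℝ) (tlv τ N)) x)
    (hu''' : ∀ x ∈ Set.Icc (0 : ℝ) (tlv τ N),
      HasDerivWithinAt u'' (u''' x) (Set.Icc (0 : ℝ) (tlv τ N)) x)
    (hcont2 : ContinuousOn u'' (Set.Icc (0 : ℝ) (tlv τ N)))
    (hcont3 : ContinuousOn u''' (Set.Icc (0 : ℝ) (tlv τ N))) :
    ∀ n, 1 ≤ n → n ≤ N →
      ∑ k ∈ Finset.Icc 1 n, ∑ j ∈ Finset.Icc 1 k,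
          doc τ k (k - j) * ‖D2 τ (fun m => u (tlv τ m)) j - u' (tlv τ j)‖ ≤
        τ 1 * (∑ k ∈ Finset.Icc 1 n, doc τ k (k - 1) * bdf2 τ 1 0) *
            (∫ t in (0 : ℝ)..(tlv τ 1), ‖u'' t‖) +
          3 / 2 * ∑ j ∈ Finset.Icc 1 n,
            τ j ^ 2 * (∑ k ∈ Finset.Icc j n, doc τ k (k - j) * bdf2 τ j 0) *
              (∫ t in (tlv τ (j - 1))..(tlv τ j), ‖u''' t‖) := by
  intro n hn1 hnN
  have hτ1 : 0 < τ 1 := hτ 1 le_rfl (by omega)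
  set J0 : ℝ := ∫ t in (0:ℝ)..(tlv τ 1), ‖u'' t‖ with hJ0def
  set F : ℕ → ℝ := fun j => ∫ t in (tlv τ (j-1))..(tlv τ j), ‖u''' t‖ with hFdef
  set G : ℕ → ℝ := fun j => ‖D2 τ (fun m => u (tlv τ m)) j - u' (tlv τ j)‖ with hGdef
  have hJ0 : 0 ≤ J0 := by
    apply intervalIntegral.integral_nonneg
    · rw [tlv_one]; exact hτ1.le
    · exact fun _ _ => norm_nonneg _
  have hF : ∀ j, 1 ≤ j → j ≤ N → 0 ≤ F j := by
    intro j h1 h2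
    apply intervalIntegral.integral_nonneg
    · exact tlv_mono N τ hτ (by omega) h2
    · exact fun _ _ => norm_nonneg _
  -- local consistency bound for j = 1
  have ETA1 : G 1 ≤ J0 := by
    rw [hGdef]
    simp only
    rw [D2_one, bdf2_one_zero, hJ0def]
    have h1T : τ 1 ≤ tlv τ N := by
      rw [← tlv_one τ]; exact tlv_mono N τ hτ (by omega) le_rfl
    have := eta1_bound (tlv τ N) u u' u'' hu' hu'' hcont2 (τ 1) hτ1 h1T
    simpa [tlv_one, tlv_zero] using this
  -- local consistency bound for j ≥ 2
  have ETA2 : ∀ j, 2 ≤ j → j ≤ N →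
      G j ≤ τ j * F j
        + ((τ j / τ (j-1))^2 / (τ j * (1 + τ j / τ (j-1))) * ((τ (j-1))^2 / 2)) * F (j-1) := by
    intro j hj2 hjN
    have ha : 0 < τ (j-1) := hτ (j-1) (by omega) (by omega)
    have hb : 0 < τ j := hτ j (by omega) hjN
    have hp : 0 ≤ tlv τ (j-2) := tlv_nonneg N τ hτ (by omega)
    have hq : tlv τ (j-2) + τ (j-1) = tlv τ (j-1) := by
      rw [tlv_succ τ (by omega : 1 ≤ j - 1), show j - 1 - 1 = j - 2 by omega]
    have hr : tlv τ (j-1) + τ j = tlv τ j := (tlv_succ τ (by omega : 1 ≤ j)).symm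
    have hT' : tlv τ (j-2) + τ (j-1) + τ j ≤ tlv τ N := by
      rw [hq, hr]; exact tlv_mono N τ hτ hjN le_rfl
    have H := eta2_bound (tlv τ N) u u' u'' u''' hu' hu'' hu''' hcont3
      (τ (j-1)) (τ j) (tlv τ (j-2)) ha hb hp hT'
    rw [hq, hr] at H
    rw [hGdef, hFdef]
    simp only
    rw [D2_two τ _ hj2, bdf2_zero_eq τ hj2, bdf2_one_eq τ hj2,
        show j - 1 - 1 = j - 2 by omega]
    exact H
  -- per-level bound
  have PK : ∀ k, 1 ≤ k → k ≤ N →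
      ∑ j ∈ Finset.Icc 1 k, doc τ k (k - j) * G j ≤
        τ 1 * (doc τ k (k - 1) * bdf2 τ 1 0) * J0
          + 3/2 * ∑ j ∈ Finset.Icc 1 k, τ j ^ 2 * (doc τ k (k - j) * bdf2 τ j 0) * F j := by
    intro k hk1 hkN
    have hins : Finset.Icc 1 k = insert 1 (Finset.Icc 2 k) := by
      ext x; simp; omega
    have h1nin : (1:ℕ) ∉ Finset.Icc 2 k := by simp
    have hterm1 : doc τ k (k - 1) * G 1 ≤ τ 1 * (doc τ k (k - 1) * bdf2 τ 1 0) * J0 := by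
      have hpos := doc_pos N τ hτ (k-1) k hkN (by omega)
      have heq : τ 1 * (doc τ k (k - 1) * bdf2 τ 1 0) * J0 = doc τ k (k - 1) * J0 := by
        rw [bdf2_one_zero]
        field_simp
      rw [heq]
      exact mul_le_mul_of_nonneg_left ETA1 hpos.le
    have hterm2 : ∑ j ∈ Finset.Icc 2 k, doc τ k (k - j) * G j ≤
        ∑ j ∈ Finset.Icc 2 k,
          (τ j ^ 2 * (doc τ k (k - j) * bdf2 τ j 0) * F j
            + 1/2 * (τ (j-1))^2 * (doc τ k (k - (j-1)) * bdf2 τ (j-1) 0) * F (j-1)) := by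
      apply Finset.sum_le_sum
      intro j hj
      rw [Finset.mem_Icc] at hj
      have hjN : j ≤ N := le_trans hj.2 hkN
      have hdoc := doc_pos N τ hτ (k-j) k hkN (by omega)
      have hFj := hF j (by omega) hjN
      have hFj1 := hF (j-1) (by omega) (by omega)
      have hb0j : 0 < bdf2 τ j 0 := bdf2_zero_pos N τ hτ (by omega) hjN
      have h1b : 1 ≤ τ j * bdf2 τ j 0 := tau_b0_ge_one N τ hτ (by omega) hjN
      calc doc τ k (k - j) * G j
          ≤ doc τ k (k - j) * (τ j * F j
              + ((τ j / τ (j-1))^2 / (τ j * (1 + τ j / τ (j-1))) * ((τ (j-1))^2 / 2)) * F (j-1)) :=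
            mul_le_mul_of_nonneg_left (ETA2 j hj.1 hjN) hdoc.le
        _ = (doc τ k (k - j) * τ j) * F j
            + (doc τ k (k - j) * ((τ j / τ (j-1))^2 / (τ j * (1 + τ j / τ (j-1))) * ((τ (j-1))^2 / 2))) * F (j-1) := by
            ring
        _ ≤ τ j ^ 2 * (doc τ k (k - j) * bdf2 τ j 0) * F j
            + 1/2 * (τ (j-1))^2 * (doc τ k (k - (j-1)) * bdf2 τ (j-1) 0) * F (j-1) := by
            apply add_le_add
            · apply mul_le_mul_of_nonneg_right _ hFj
              have hbj := hτ j (by omega) hjN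
              nlinarith [mul_le_mul_of_nonneg_left h1b (mul_nonneg hdoc.le hbj.le)]
            · rw [KSI N τ hτ hj.1 hj.2 hkN]
    have hA : ∑ j ∈ Finset.Icc 2 k, τ j ^ 2 * (doc τ k (k - j) * bdf2 τ j 0) * F j
        ≤ ∑ j ∈ Finset.Icc 1 k, τ j ^ 2 * (doc τ k (k - j) * bdf2 τ j 0) * F j := by
      apply Finset.sum_le_sum_of_subset_of_nonneg
      · intro x hx; rw [Finset.mem_Icc] at hx ⊢; omega
      · intro i hi _
        rw [Finset.mem_Icc] at hi
        have := doc_pos N τ hτ (k-i) k hkN (by omega)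
        have := bdf2_zero_pos N τ hτ (by omega : 1 ≤ i) (le_trans hi.2 hkN)
        have := hF i (by omega) (le_trans hi.2 hkN)
        positivity
    have hB : ∑ j ∈ Finset.Icc 2 k,
          1/2 * (τ (j-1))^2 * (doc τ k (k - (j-1)) * bdf2 τ (j-1) 0) * F (j-1)
        = ∑ j ∈ Finset.Icc 1 (k-1),
          1/2 * (τ j)^2 * (doc τ k (k - j) * bdf2 τ j 0) * F j := by
      apply Finset.sum_nbij' (fun a => a - 1) (fun a => a + 1)
      · intro a ha; rw [Finset.mem_Icc] at ha ⊢; omega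
      · intro a ha; rw [Finset.mem_Icc] at ha ⊢; omega
      · intro a ha; rw [Finset.mem_Icc] at ha; omega
      · intro a ha; rw [Finset.mem_Icc] at ha; omega
      · intro a ha; rfl
    have hB2 : ∑ j ∈ Finset.Icc 1 (k-1),
          1/2 * (τ j)^2 * (doc τ k (k - j) * bdf2 τ j 0) * F j
        ≤ ∑ j ∈ Finset.Icc 1 k,
          1/2 * (τ j)^2 * (doc τ k (k - j) * bdf2 τ j 0) * F j := by
      apply Finset.sum_le_sum_of_subset_of_nonneg
      · intro x hx; rw [Finset.mem_Icc] at hx ⊢; omega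
      · intro i hi _
        rw [Finset.mem_Icc] at hi
        have := doc_pos N τ hτ (k-i) k hkN (by omega)
        have := bdf2_zero_pos N τ hτ (by omega : 1 ≤ i) (le_trans hi.2 hkN)
        have := hF i (by omega) (le_trans hi.2 hkN)
        positivity
    have hcomb : ∑ j ∈ Finset.Icc 1 k, τ j ^ 2 * (doc τ k (k - j) * bdf2 τ j 0) * F j
        + ∑ j ∈ Finset.Icc 1 k, 1/2 * (τ j)^2 * (doc τ k (k - j) * bdf2 τ j 0) * F j
        = 3/2 * ∑ j ∈ Finset.Icc 1 k, τ j ^ 2 * (doc τ k (k - j) * bdf2 τ j 0) * F j := by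
      rw [Finset.mul_sum, ← Finset.sum_add_distrib]
      apply Finset.sum_congr rfl
      intro j _
      ring
    calc ∑ j ∈ Finset.Icc 1 k, doc τ k (k - j) * G j
        = doc τ k (k - 1) * G 1 + ∑ j ∈ Finset.Icc 2 k, doc τ k (k - j) * G j := by
          rw [hins, Finset.sum_insert h1nin]
      _ ≤ τ 1 * (doc τ k (k - 1) * bdf2 τ 1 0) * J0
          + (∑ j ∈ Finset.Icc 2 k, τ j ^ 2 * (doc τ k (k - j) * bdf2 τ j 0) * F j
             + ∑ j ∈ Finset.Icc 2 k,
               1/2 * (τ (j-1))^2 * (doc τ k (k - (j-1)) * bdf2 τ (j-1) 0) * F (j-1)) := by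
          rw [← Finset.sum_add_distrib]
          exact add_le_add hterm1 hterm2
      _ ≤ τ 1 * (doc τ k (k - 1) * bdf2 τ 1 0) * J0
          + (∑ j ∈ Finset.Icc 1 k, τ j ^ 2 * (doc τ k (k - j) * bdf2 τ j 0) * F j
             + ∑ j ∈ Finset.Icc 1 k,
               1/2 * (τ j)^2 * (doc τ k (k - j) * bdf2 τ j 0) * F j) := by
          rw [hB]
          exact add_le_add le_rfl (add_le_add hA hB2)
      _ = τ 1 * (doc τ k (k - 1) * bdf2 τ 1 0) * J0
          + 3/2 * ∑ j ∈ Finset.Icc 1 k, τ j ^ 2 * (doc τ k (k - j) * bdf2 τ j 0) * F j := by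
          rw [hcomb]
  -- sum over k and swap the order of summation
  calc ∑ k ∈ Finset.Icc 1 n, ∑ j ∈ Finset.Icc 1 k, doc τ k (k - j) * G j
      ≤ ∑ k ∈ Finset.Icc 1 n,
          (τ 1 * (doc τ k (k - 1) * bdf2 τ 1 0) * J0
            + 3/2 * ∑ j ∈ Finset.Icc 1 k, τ j ^ 2 * (doc τ k (k - j) * bdf2 τ j 0) * F j) := by
        apply Finset.sum_le_sum
        intro k hk
        rw [Finset.mem_Icc] at hk
        exact PK k hk.1 (le_trans hk.2 hnN)
    _ = ∑ k ∈ Finset.Icc 1 n, τ 1 * (doc τ k (k - 1) * bdf2 τ 1 0) * J0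
        + ∑ k ∈ Finset.Icc 1 n, 3/2 * ∑ j ∈ Finset.Icc 1 k, τ j ^ 2 * (doc τ k (k - j) * bdf2 τ j 0) * F j :=
        Finset.sum_add_distrib
    _ = τ 1 * (∑ k ∈ Finset.Icc 1 n, doc τ k (k - 1) * bdf2 τ 1 0) * J0
        + 3/2 * ∑ j ∈ Finset.Icc 1 n, τ j ^ 2 * (∑ k ∈ Finset.Icc j n, doc τ k (k - j) * bdf2 τ j 0) * F j := by
        congr 1
        · rw [← Finset.sum_mul, ← Finset.mul_sum]
        · rw [← Finset.mul_sum]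
          congr 1
          rw [Finset.sum_comm' (s := Finset.Icc 1 n) (t := fun k => Finset.Icc 1 k)
            (t' := Finset.Icc 1 n) (s' := fun j => Finset.Icc j n)
            (by intro x y; simp only [Finset.mem_Icc]; omega)]
          apply Finset.sum_congr rfl
          intro j _
          rw [← Finset.sum_mul, ← Finset.mul_sum]
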